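/- Let G be a compact group acting by linear isometries on a finite-dimensional real inner product space V, and suppose σ₁(v) = ‖v‖² is one of the components of the orbit map σ. Let I₀ ⊆ ℝ be an interval and c : I₀ → ℝⁿ continuous with c(I₀) ⊆ σ(V). Suppose that for each t₀ in I₀ with c₁(t₀) ≠ 0 there exist a neighborhood I_{t₀} of t₀ in {t ∈ I₀ : c₁(t) ≠ 0} and a lift c̄_{t₀} : I_{t₀} → V of c (i.e., σ ∘ c̄_{t₀} = c on I_{t₀}) which is Lipschitz with constant at most L, uniformly in t₀. Then there exists a lift c̄ : I₀ → V of c which is Lipschitz on I₀ with constant at most L. -/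

import Mathlib

open Set
open scoped NNReal


open Set
open scoped NNReal

set_option linter.unusedSectionVars false
section Aux
variable {V : Type*} [NormedAddCommGroup V] [NormedSpace ℝ V]
variable {n : ℕ}

def HasLocalLifts (σ : V → Fin n → ℝ) (e : Fin n) (L : ℝ≥0)
    (I₀ : Set ℝ) (c : ℝ → Fin n → ℝ) : Prop :=
  ∀ t₀ ∈ I₀, c t₀ e ≠ 0 → ∃ ε > (0:ℝ), ∃ g : ℝ → V,
    (∀ t ∈ Metric.ball t₀ ε ∩ I₀, c t e ≠ 0 ∧ σ (g t) = c t) ∧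
    LipschitzOnWith L g (Metric.ball t₀ ε ∩ I₀)

def Compat (σ : V → Fin n → ℝ) : Prop :=
  ∀ v w : V, σ v = σ w → ∃ T : V ≃ₗᵢ[ℝ] V, T w = v ∧ ∀ u, σ (T u) = σ u

lemma glue_lip {L : ℝ≥0} {q : ℝ} {D₁ D₂ : Set ℝ} {f₁ f₂ : ℝ → V}
    (h₁q : ∀ s ∈ D₁, s ≤ q) (h₂q : ∀ t ∈ D₂, q ≤ t)
    (hq₁ : q ∈ D₁) (hq₂ : q ∈ D₂) (hval : f₁ q = f₂ q)
    (hf₁ : LipschitzOnWith L f₁ D₁) (hf₂ : LipschitzOnWith L f₂ D₂) :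
    LipschitzOnWith L (fun u => if u < q then f₁ u else f₂ u) (D₁ ∪ D₂) := by
  rw [lipschitzOnWith_iff_dist_le_mul] at *
  have key : ∀ s ∈ D₁ ∪ D₂, ∀ t ∈ D₁ ∪ D₂, s ≤ t →
      dist (if s < q then f₁ s else f₂ s) (if t < q then f₁ t else f₂ t) ≤ L * dist s t := by
    intro s hs t ht hst
    by_cases htq : t < q
    · have hsq : s < q := lt_of_le_of_lt hst htq
      have hs₁ : s ∈ D₁ := hs.resolve_right (fun h => absurd (h₂q s h) (by linarith))
      have ht₁ : t ∈ D₁ := ht.resolve_right (fun h => absurd (h₂q t h) (by linarith))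
      simp only [if_pos hsq, if_pos htq]
      exact hf₁ s hs₁ t ht₁
    · have ht₂ : t ∈ D₂ := by
        rcases ht with h | h
        · have : t = q := le_antisymm (h₁q t h) (not_lt.1 htq)
          rw [this]; exact hq₂
        · exact h
      by_cases hsq : s < q
      · have hs₁ : s ∈ D₁ := hs.resolve_right (fun h => absurd (h₂q s h) (by linarith))
        simp only [if_pos hsq, if_neg htq]
        have h1 : dist (f₁ s) (f₁ q) ≤ L * dist s q := hf₁ s hs₁ q hq₁
        have h2 : dist (f₂ q) (f₂ t) ≤ L * dist q t := hf₂ q hq₂ t ht₂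
        have h3 : dist (f₁ s) (f₂ t) ≤ dist (f₁ s) (f₁ q) + dist (f₂ q) (f₂ t) := by
          rw [hval]; exact dist_triangle _ _ _
        have hds : dist s q = q - s := by rw [Real.dist_eq, abs_of_nonpos (by linarith)]; ring
        have hdq : dist q t = t - q := by
          rw [Real.dist_eq, abs_of_nonpos (by linarith [not_lt.1 htq])]; ring
        have hdst : dist s t = t - s := by rw [Real.dist_eq, abs_of_nonpos (by linarith)]; ring
        calc dist (f₁ s) (f₂ t) ≤ L * dist s q + L * dist q t := le_trans h3 (add_le_add h1 h2)
          _ = L * dist s t := by rw [hds, hdq, hdst]; ring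
      · have hs₂ : s ∈ D₂ := by
          rcases hs with h | h
          · have : s = q := le_antisymm (h₁q s h) (not_lt.1 hsq)
            rw [this]; exact hq₂
          · exact h
        simp only [if_neg hsq, if_neg htq]
        exact hf₂ s hs₂ t ht₂
  intro s hs t ht
  rcases le_total s t with h | h
  · exact key s hs t ht h
  · rw [dist_comm, dist_comm s t]; exact key t ht s hs h

lemma core_right {σ : V → Fin n → ℝ} {e : Fin n} {L : ℝ≥0} (hM : Compat σ)
    {I₀ : Set ℝ} {c : ℝ → Fin n → ℝ} (hH : HasLocalLifts σ e L I₀ c)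
    {α β : ℝ} (hαβ : α ≤ β) (hsub : Icc α β ⊆ I₀)
    (hS : ∀ u ∈ Icc α β, c u e ≠ 0) {v : V} (hv : σ v = c α) :
    ∃ f : ℝ → V, f α = v ∧ (∀ t ∈ Icc α β, σ (f t) = c t) ∧
      LipschitzOnWith L f (Icc α β) := by
  set T : Set ℝ := {x | x ∈ Icc α β ∧ ∃ f : ℝ → V, f α = v ∧
      (∀ t ∈ Icc α x, σ (f t) = c t) ∧ LipschitzOnWith L f (Icc α x)} with hT
  have hαT : α ∈ T := by
    refine ⟨⟨le_refl α, hαβ⟩, fun _ => v, rfl, ?_, ?_⟩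
    · intro t ht
      rw [Icc_self] at ht
      rw [mem_singleton_iff] at ht
      rw [ht]; exact hv
    · exact ((LipschitzWith.const v).weaken (zero_le : (0:ℝ≥0) ≤ L)).lipschitzOnWith
  have hTne : T.Nonempty := ⟨α, hαT⟩
  have hTbdd : BddAbove T := ⟨β, fun x hx => hx.1.2⟩
  set x₀ := sSup T with hx₀
  have hx₀mem : x₀ ∈ Icc α β := ⟨le_csSup hTbdd hαT, csSup_le hTne (fun x hx => hx.1.2)⟩
  obtain ⟨ε, hε, g, hg1, hg2⟩ := hH x₀ (hsub hx₀mem) (hS x₀ hx₀mem)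
  obtain ⟨x, hxT, hxgt⟩ := exists_lt_of_lt_csSup hTne (by linarith : x₀ - ε < x₀)
  have hxle : x ≤ x₀ := le_csSup hTbdd hxT
  obtain ⟨⟨hαx, hxβ⟩, f, hfα, hflift, hflip⟩ := hxT
  set y := min β (x₀ + ε/2) with hy
  have hxy : x ≤ y := le_min hxβ (by linarith)
  have hyβ : y ≤ β := min_le_left _ _
  have hαy : α ≤ y := le_trans hαx hxy
  have hIccsub : Icc x y ⊆ Metric.ball x₀ ε ∩ I₀ := by
    intro u ⟨hu1, hu2⟩
    have huβ : u ≤ β := le_trans hu2 hyβ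
    have huI : u ∈ Icc α β := ⟨le_trans hαx hu1, huβ⟩
    refine ⟨?_, hsub huI⟩
    rw [Metric.mem_ball, Real.dist_eq, abs_lt]
    have h1 : u ≤ x₀ + ε/2 := le_trans hu2 (min_le_right _ _)
    have h2 : x₀ - ε < u := lt_of_lt_of_le hxgt hu1
    constructor <;> linarith
  have hxball : x ∈ Metric.ball x₀ ε ∩ I₀ := hIccsub ⟨le_refl x, hxy⟩
  have hσgx : σ (g x) = c x := (hg1 x hxball).2
  have hσfx : σ (f x) = c x := hflift x ⟨hαx, le_refl x⟩
  obtain ⟨Ti, hTi1, hTi2⟩ := hM (f x) (g x) (by rw [hσfx, hσgx])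
  set h : ℝ → V := fun u => if u < x then f u else Ti (g u) with hh
  have hyT : y ∈ T := by
    refine ⟨⟨hαy, hyβ⟩, h, ?_, ?_, ?_⟩
    · by_cases hax : α < x
      · simp only [hh, if_pos hax, hfα]
      · have hxα : x = α := le_antisymm (not_lt.1 hax) hαx
        simp only [hh, if_neg hax]
        rw [← hxα, hTi1, hxα, hfα]
    · intro t ⟨ht1, ht2⟩
      by_cases htx : t < x
      · simp only [hh, if_pos htx]
        exact hflift t ⟨ht1, htx.le⟩
      · simp only [hh, if_neg htx]
        have htm : t ∈ Metric.ball x₀ ε ∩ I₀ := hIccsub ⟨not_lt.1 htx, ht2⟩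
        rw [hTi2, (hg1 t htm).2]
    · have hTig : LipschitzOnWith L (fun u => Ti (g u)) (Icc x y) := by
        rw [lipschitzOnWith_iff_dist_le_mul]
        rw [lipschitzOnWith_iff_dist_le_mul] at hg2
        intro s hs t ht
        calc dist (Ti (g s)) (Ti (g t)) = dist (g s) (g t) := Ti.dist_map _ _
          _ ≤ L * dist s t := hg2 s (hIccsub hs) t (hIccsub ht)
      have := glue_lip (L := L) (q := x) (D₁ := Icc α x) (D₂ := Icc x y)
        (f₁ := f) (f₂ := fun u => Ti (g u))
        (fun s hs => hs.2) (fun t ht => ht.1)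
        ⟨hαx, le_refl x⟩ ⟨le_refl x, hxy⟩ (show f x = Ti (g x) from hTi1.symm) hflip hTig
      rwa [Icc_union_Icc_eq_Icc hαx hxy] at this
  have hx₀β : x₀ = β := by
    by_contra hne
    have hx₀lt : x₀ < β := lt_of_le_of_ne hx₀mem.2 hne
    have hygt : x₀ < y := lt_min hx₀lt (by linarith)
    exact absurd (le_csSup hTbdd hyT) (not_le.2 hygt)
  have hyeq : y = β := by rw [hy, hx₀β]; exact min_eq_left (by linarith)
  obtain ⟨_, f', hf'⟩ := hyeq ▸ hyT
  exact ⟨f', hf'⟩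


lemma reflect_HLL {σ : V → Fin n → ℝ} {e : Fin n} {L : ℝ≥0}
    {I₀ : Set ℝ} {c : ℝ → Fin n → ℝ} (hH : HasLocalLifts σ e L I₀ c) :
    HasLocalLifts σ e L ((fun x : ℝ => -x) ⁻¹' I₀) (fun t => c (-t)) := by
  intro t₀ ht₀ hne
  obtain ⟨ε, hε, g, hg1, hg2⟩ := hH (-t₀) ht₀ hne
  have hball : ∀ t : ℝ, t ∈ Metric.ball t₀ ε ↔ -t ∈ Metric.ball (-t₀) ε := by
    intro t
    simp only [Metric.mem_ball, Real.dist_eq]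
    rw [show -t - -t₀ = -(t - t₀) by ring, abs_neg]
  refine ⟨ε, hε, fun t => g (-t), ?_, ?_⟩
  · intro t ⟨ht1, ht2⟩
    exact hg1 (-t) ⟨(hball t).1 ht1, ht2⟩
  · rw [lipschitzOnWith_iff_dist_le_mul]
    rw [lipschitzOnWith_iff_dist_le_mul] at hg2
    intro s ⟨hs1, hs2⟩ t ⟨ht1, ht2⟩
    have := hg2 (-s) ⟨(hball s).1 hs1, hs2⟩ (-t) ⟨(hball t).1 ht1, ht2⟩
    calc dist (g (-s)) (g (-t)) ≤ L * dist (-s) (-t) := this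
      _ = L * dist s t := by rw [dist_neg_neg]

lemma core_left {σ : V → Fin n → ℝ} {e : Fin n} {L : ℝ≥0} (hM : Compat σ)
    {I₀ : Set ℝ} {c : ℝ → Fin n → ℝ} (hH : HasLocalLifts σ e L I₀ c)
    {α β : ℝ} (hαβ : α ≤ β) (hsub : Icc α β ⊆ I₀)
    (hS : ∀ u ∈ Icc α β, c u e ≠ 0) {v : V} (hv : σ v = c β) :
    ∃ f : ℝ → V, f β = v ∧ (∀ t ∈ Icc α β, σ (f t) = c t) ∧
      LipschitzOnWith L f (Icc α β) := by
  have hmem : ∀ u : ℝ, u ∈ Icc (-β) (-α) → -u ∈ Icc α β := by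
    intro u ⟨h1, h2⟩; exact ⟨by linarith, by linarith⟩
  obtain ⟨f, hf1, hf2, hf3⟩ := core_right hM (reflect_HLL hH)
    (neg_le_neg hαβ : -β ≤ -α)
    (fun u hu => hsub (hmem u hu))
    (fun u hu => hS (-u) (hmem u hu))
    (v := v) (by simpa using hv)
  refine ⟨fun t => f (-t), by simpa using hf1, ?_, ?_⟩
  · intro t ⟨ht1, ht2⟩
    have := hf2 (-t) ⟨by linarith, by linarith⟩
    simpa using this
  · rw [lipschitzOnWith_iff_dist_le_mul]
    rw [lipschitzOnWith_iff_dist_le_mul] at hf3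
    intro s ⟨hs1, hs2⟩ t ⟨ht1, ht2⟩
    have := hf3 (-s) ⟨by linarith, by linarith⟩ (-t) ⟨by linarith, by linarith⟩
    calc dist (f (-s)) (f (-t)) ≤ L * dist (-s) (-t) := this
      _ = L * dist s t := by rw [dist_neg_neg]


lemma zero_right {σ : V → Fin n → ℝ} {e : Fin n} {L : ℝ≥0} (hM : Compat σ)
    {I₀ : Set ℝ} {c : ℝ → Fin n → ℝ} (hH : HasLocalLifts σ e L I₀ c)
    (hsq : ∀ w : V, σ w e = ‖w‖ ^ 2)
    (hce : ContinuousOn (fun u => c u e) I₀)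
    {t z : ℝ} (htz : t ≤ z) (hsub : Icc t z ⊆ I₀) (hz : c z e = 0)
    {v : V} (hv : σ v = c t) : ‖v‖ ≤ (L : ℝ) * (z - t) := by
  by_cases h0 : c t e = 0
  · have : ‖v‖ ^ 2 = 0 := by rw [← hsq v, hv, h0]
    have hv0 : ‖v‖ = 0 := by
      have := pow_eq_zero_iff (n := 2) (by norm_num) |>.1 this
      exact this
    rw [hv0]
    exact mul_nonneg L.coe_nonneg (by linarith)
  · set Zs : Set ℝ := {u ∈ Icc t z | c u e = 0} with hZs
    have hZclosed : IsClosed Zs := by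
      have : Zs = Icc t z ∩ (fun u => c u e) ⁻¹' {0} := by
        ext u; simp [hZs]
      rw [this]
      exact ContinuousOn.preimage_isClosed_of_isClosed (hce.mono hsub)
        isClosed_Icc isClosed_singleton
    have hZne : Zs.Nonempty := ⟨z, ⟨htz, le_refl z⟩, hz⟩
    have hZbdd : BddBelow Zs := ⟨t, fun u hu => hu.1.1⟩
    set z₀ := sInf Zs with hz₀
    have hz₀mem : z₀ ∈ Zs := hZclosed.csInf_mem hZne hZbdd
    have htz₀ : t < z₀ := by
      rcases lt_or_eq_of_le hz₀mem.1.1 with h | h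
      · exact h
      · exact absurd (h ▸ hz₀mem.2) h0
    have hz₀z : z₀ ≤ z := hz₀mem.1.2
    have hz₀I : z₀ ∈ I₀ := hsub ⟨hz₀mem.1.1, hz₀z⟩
    have hbound : ∀ u ∈ Ico t z₀, ‖v‖ ≤ (L : ℝ) * (u - t) + Real.sqrt (c u e) := by
      intro u ⟨hu1, hu2⟩
      have hsub' : Icc t u ⊆ I₀ := fun w hw => hsub ⟨hw.1, le_trans hw.2 (by linarith)⟩
      have hS' : ∀ w ∈ Icc t u, c w e ≠ 0 := by
        intro w hw hcw
        have : z₀ ≤ w := csInf_le hZbdd ⟨⟨hw.1, le_trans hw.2 (by linarith)⟩, hcw⟩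
        linarith [hw.2]
      obtain ⟨f, hf1, hf2, hf3⟩ := core_right hM hH hu1 hsub' hS' hv
      rw [lipschitzOnWith_iff_dist_le_mul] at hf3
      have hd : dist v (f u) ≤ (L : ℝ) * (u - t) := by
        have := hf3 t ⟨le_refl t, hu1⟩ u ⟨hu1, le_refl u⟩
        rw [hf1] at this
        calc dist v (f u) ≤ L * dist t u := this
          _ = L * (u - t) := by
            rw [Real.dist_eq, abs_of_nonpos (by linarith)]; ring_nf
      have hn : ‖f u‖ = Real.sqrt (c u e) := by
        rw [← hf2 u ⟨hu1, le_refl u⟩, hsq, Real.sqrt_sq (norm_nonneg _)]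
      calc ‖v‖ = ‖v - f u + f u‖ := by rw [sub_add_cancel]
        _ ≤ ‖v - f u‖ + ‖f u‖ := norm_add_le _ _
        _ ≤ (L : ℝ) * (u - t) + Real.sqrt (c u e) := by
            rw [hn]
            exact add_le_add (by rw [← dist_eq_norm]; exact hd) le_rfl
    have hlim : Filter.Tendsto (fun u => (L : ℝ) * (u - t) + Real.sqrt (c u e))
        (nhdsWithin z₀ (Ico t z₀)) (nhds ((L : ℝ) * (z₀ - t) + Real.sqrt (c z₀ e))) := by
      apply Filter.Tendsto.add
      · apply Filter.Tendsto.mono_left _ nhdsWithin_le_nhds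
        exact (continuous_const.mul (continuous_id.sub continuous_const)).tendsto z₀
      · apply Real.continuous_sqrt.continuousAt.tendsto.comp
        exact (hce z₀ hz₀I).mono (fun w hw => hsub ⟨hw.1, le_trans hw.2.le hz₀z⟩)
    have hne : (nhdsWithin z₀ (Ico t z₀)).NeBot := right_nhdsWithin_Ico_neBot htz₀
    have hfinal : ‖v‖ ≤ (L : ℝ) * (z₀ - t) + Real.sqrt (c z₀ e) := by
      refine ge_of_tendsto hlim ?_
      filter_upwards [self_mem_nhdsWithin] with u hu
      exact hbound u hu
    rw [hz₀mem.2, Real.sqrt_zero, add_zero] at hfinal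
    calc ‖v‖ ≤ (L : ℝ) * (z₀ - t) := hfinal
      _ ≤ (L : ℝ) * (z - t) := by
          apply mul_le_mul_of_nonneg_left _ L.coe_nonneg
          linarith

lemma zero_bound {σ : V → Fin n → ℝ} {e : Fin n} {L : ℝ≥0} (hM : Compat σ)
    {I₀ : Set ℝ} {c : ℝ → Fin n → ℝ} (hH : HasLocalLifts σ e L I₀ c)
    (hsq : ∀ w : V, σ w e = ‖w‖ ^ 2)
    (hce : ContinuousOn (fun u => c u e) I₀) (hconv : Convex ℝ I₀)
    {t z : ℝ} (ht : t ∈ I₀) (hzI : z ∈ I₀) (hz : c z e = 0)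
    {v : V} (hv : σ v = c t) : ‖v‖ ≤ (L : ℝ) * |t - z| := by
  have hord := hconv.ordConnected
  rcases le_total t z with h | h
  · have := zero_right hM hH hsq hce h (hord.out ht hzI) hz hv
    rwa [abs_of_nonpos (by linarith), neg_sub]
  · have hH' := reflect_HLL hH
    have hce' : ContinuousOn (fun u => c (-u) e) ((fun x : ℝ => -x) ⁻¹' I₀) := by
      exact ContinuousOn.comp hce (continuous_neg.continuousOn) (fun u hu => hu)
    have hsub' : Icc (-t) (-z) ⊆ (fun x : ℝ => -x) ⁻¹' I₀ := by
      intro u ⟨h1, h2⟩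
      show -u ∈ I₀
      exact hord.out hzI ht ⟨by linarith, by linarith⟩
    have := zero_right (c := fun u => c (-u)) hM hH' hsq hce'
      (neg_le_neg h) hsub' (by simpa using hz) (v := v) (by simpa using hv)
    rw [abs_of_nonneg (by linarith)]
    calc ‖v‖ ≤ (L : ℝ) * (-z - -t) := this
      _ = (L : ℝ) * (t - z) := by ring

lemma exists_cofinal_above (C : Set ℝ) (hne : C.Nonempty) :
    ∃ b : ℕ → ℝ, (∀ n, b n ∈ C) ∧ ∀ t ∈ C, ∃ n, t ≤ b n := by
  by_cases hbdd : BddAbove C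
  · by_cases hmem : sSup C ∈ C
    · exact ⟨fun _ => sSup C, fun _ => hmem, fun t ht => ⟨0, le_csSup hbdd ht⟩⟩
    · have hex : ∀ m : ℕ, ∃ y ∈ C, sSup C - 1/(m+1 : ℝ) < y := by
        intro m
        exact exists_lt_of_lt_csSup hne (by
          have : (0:ℝ) < 1/(m+1 : ℝ) := by positivity
          linarith)
      choose b hb1 hb2 using hex
      refine ⟨b, hb1, fun t ht => ?_⟩
      have htlt : t < sSup C := lt_of_le_of_ne (le_csSup hbdd ht) (fun h => hmem (h ▸ ht))
      obtain ⟨m, hm⟩ := exists_nat_one_div_lt (show (0:ℝ) < sSup C - t by linarith)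
      exact ⟨m, by linarith [hb2 m]⟩
  · have hex : ∀ m : ℕ, ∃ y ∈ C, (m : ℝ) < y := by
      intro m
      by_contra hcon
      push_neg at hcon
      exact hbdd ⟨m, fun y hy => hcon y hy⟩
    choose b hb1 hb2 using hex
    refine ⟨b, hb1, fun t ht => ?_⟩
    obtain ⟨m, hm⟩ := exists_nat_ge t
    exact ⟨m, le_trans hm (hb2 m).le⟩

lemma exists_cofinal_below (C : Set ℝ) (hne : C.Nonempty) :
    ∃ a : ℕ → ℝ, (∀ n, a n ∈ C) ∧ ∀ t ∈ C, ∃ n, a n ≤ t := by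
  obtain ⟨b, hb1, hb2⟩ := exists_cofinal_above ((fun x : ℝ => -x) '' C)
    (hne.image _)
  refine ⟨fun n => -(b n), fun n => ?_, fun t ht => ?_⟩
  · obtain ⟨y, hy, hyeq⟩ := hb1 n
    show -(b n) ∈ C
    rw [← hyeq, neg_neg]; exact hy
  · obtain ⟨m, hm⟩ := hb2 (-t) ⟨t, ht, rfl⟩
    exact ⟨m, show -(b m) ≤ t by linarith⟩

lemma single_lift {σ : V → Fin n → ℝ} {e : Fin n} {L : ℝ≥0} (hM : Compat σ)
    {I₀ : Set ℝ} {c : ℝ → Fin n → ℝ} (hH : HasLocalLifts σ e L I₀ c)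
    (hrange : ∀ t ∈ I₀, ∃ v : V, σ v = c t)
    {C : Set ℝ} (hCI : ∀ u ∈ C, u ∈ I₀) (hCS : ∀ u ∈ C, c u e ≠ 0)
    (hconv : Convex ℝ C) :
    ∃ f : ℝ → V, (∀ t ∈ C, σ (f t) = c t) ∧ LipschitzOnWith L f C := by
  classical
  rcases C.eq_empty_or_nonempty with rfl | hne
  · exact ⟨0, by simp, lipschitzOnWith_empty _ _⟩
  obtain ⟨t₁, ht₁⟩ := hne
  obtain ⟨a, ha1, ha2⟩ := exists_cofinal_below C ⟨t₁, ht₁⟩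
  obtain ⟨b, hb1, hb2⟩ := exists_cofinal_above C ⟨t₁, ht₁⟩
  obtain ⟨A, hA0, hAs⟩ : ∃ A : ℕ → ℝ, A 0 = t₁ ∧ ∀ k, A (k+1) = min (A k) (a k) :=
    ⟨fun n => Nat.rec t₁ (fun k x => min x (a k)) n, rfl, fun k => rfl⟩
  obtain ⟨B, hB0, hBs⟩ : ∃ B : ℕ → ℝ, B 0 = t₁ ∧ ∀ k, B (k+1) = max (B k) (b k) :=
    ⟨fun n => Nat.rec t₁ (fun k x => max x (b k)) n, rfl, fun k => rfl⟩
  have hAmem : ∀ k, A k ∈ C := by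
    intro k; induction k with
    | zero => rw [hA0]; exact ht₁
    | succ k ih =>
      rw [hAs k]
      rcases le_total (A k) (a k) with h | h
      · rw [min_eq_left h]; exact ih
      · rw [min_eq_right h]; exact ha1 k
  have hBmem : ∀ k, B k ∈ C := by
    intro k; induction k with
    | zero => rw [hB0]; exact ht₁
    | succ k ih =>
      rw [hBs k]
      rcases le_total (B k) (b k) with h | h
      · rw [max_eq_right h]; exact hb1 k
      · rw [max_eq_left h]; exact ih
  have hAanti : ∀ {m k : ℕ}, k ≤ m → A m ≤ A k := by
    intro m k h
    induction m with
    | zero => rw [Nat.le_zero.1 h]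
    | succ m ih =>
      rcases Nat.lt_or_ge k (m+1) with h' | h'
      · calc A (m+1) ≤ A m := by rw [hAs m]; exact min_le_left _ _
          _ ≤ A k := ih (Nat.lt_succ_iff.1 h')
      · rw [le_antisymm h h']
  have hBmono : ∀ {m k : ℕ}, k ≤ m → B k ≤ B m := by
    intro m k h
    induction m with
    | zero => rw [Nat.le_zero.1 h]
    | succ m ih =>
      rcases Nat.lt_or_ge k (m+1) with h' | h'
      · calc B k ≤ B m := ih (Nat.lt_succ_iff.1 h')
          _ ≤ B (m+1) := by rw [hBs m]; exact le_max_left _ _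
      · rw [le_antisymm h h']
  have hAB : ∀ k, A k ≤ B k := by
    intro k
    calc A k ≤ A 0 := hAanti (Nat.zero_le k)
      _ = t₁ := hA0
      _ = B 0 := hB0.symm
      _ ≤ B k := hBmono (Nat.zero_le k)
  have hIccC : ∀ k, Icc (A k) (B k) ⊆ C :=
    fun k => hconv.ordConnected.out (hAmem k) (hBmem k)
  obtain ⟨v₁, hv₁⟩ := hrange t₁ (hCI t₁ ht₁)
  have hGood0 : (∀ t ∈ Icc (A 0) (B 0), σ ((fun _ => v₁) t) = c t) ∧
      LipschitzOnWith L (fun _ => v₁) (Icc (A 0) (B 0)) := by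
    constructor
    · intro t ht
      rw [hA0, hB0, Icc_self, mem_singleton_iff] at ht
      rw [ht]; exact hv₁
    · exact ((LipschitzWith.const v₁).weaken (zero_le : (0:ℝ≥0) ≤ L)).lipschitzOnWith
  have hstep : ∀ (k : ℕ) (f : ℝ → V), ∃ f' : ℝ → V,
      ((∀ t ∈ Icc (A k) (B k), σ (f t) = c t) ∧ LipschitzOnWith L f (Icc (A k) (B k))) →
      ((∀ t ∈ Icc (A k) (B k), f' t = f t) ∧
       (∀ t ∈ Icc (A (k+1)) (B (k+1)), σ (f' t) = c t) ∧
       LipschitzOnWith L f' (Icc (A (k+1)) (B (k+1)))) := by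
    intro k f
    by_cases hGood : (∀ t ∈ Icc (A k) (B k), σ (f t) = c t) ∧
        LipschitzOnWith L f (Icc (A k) (B k))
    swap
    · exact ⟨f, fun h => absurd h hGood⟩
    obtain ⟨hflift, hflip⟩ := hGood
    have hA1 : A (k+1) ≤ A k := by rw [hAs k]; exact min_le_left _ _
    have hB1 : B k ≤ B (k+1) := by rw [hBs k]; exact le_max_left _ _
    have hsubL : Icc (A (k+1)) (A k) ⊆ C := fun u hu =>
      hIccC (k+1) ⟨hu.1, le_trans hu.2 (le_trans (hAB k) hB1)⟩
    have hsubR : Icc (B k) (B (k+1)) ⊆ C := fun u hu =>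
      hIccC (k+1) ⟨le_trans (le_trans hA1 (hAB k)) hu.1, hu.2⟩
    obtain ⟨gL, hgL1, hgL2, hgL3⟩ := core_left hM hH hA1
      (fun u hu => hCI u (hsubL hu)) (fun u hu => hCS u (hsubL hu))
      (v := f (A k)) (hflift (A k) ⟨le_refl _, hAB k⟩)
    obtain ⟨gR, hgR1, hgR2, hgR3⟩ := core_right hM hH hB1
      (fun u hu => hCI u (hsubR hu)) (fun u hu => hCS u (hsubR hu))
      (v := f (B k)) (hflift (B k) ⟨hAB k, le_refl _⟩)
    set f'' : ℝ → V := fun u => if u < A k then gL u else f u with hf''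
    have hf''lip : LipschitzOnWith L f'' (Icc (A (k+1)) (B k)) := by
      have := glue_lip (L := L) (q := A k) (D₁ := Icc (A (k+1)) (A k))
        (D₂ := Icc (A k) (B k)) (f₁ := gL) (f₂ := f)
        (fun s hs => hs.2) (fun t ht => ht.1)
        ⟨hA1, le_refl _⟩ ⟨le_refl _, hAB k⟩ hgL1 hgL3 hflip
      rwa [Icc_union_Icc_eq_Icc hA1 (hAB k)] at this
    have hf''Bk : f'' (B k) = f (B k) := by
      rw [hf'']
      simp only [if_neg (not_lt.2 (hAB k))]
    set f' : ℝ → V := fun u => if u < B k then f'' u else gR u with hf'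
    have hf'lip : LipschitzOnWith L f' (Icc (A (k+1)) (B (k+1))) := by
      have := glue_lip (L := L) (q := B k) (D₁ := Icc (A (k+1)) (B k))
        (D₂ := Icc (B k) (B (k+1))) (f₁ := f'') (f₂ := gR)
        (fun s hs => hs.2) (fun t ht => ht.1)
        ⟨le_trans hA1 (hAB k), le_refl _⟩ ⟨le_refl _, hB1⟩
        (by rw [hf''Bk, hgR1]) hf''lip hgR3
      rwa [Icc_union_Icc_eq_Icc (le_trans hA1 (hAB k)) hB1] at this
    refine ⟨f', fun _ => ⟨?_, ?_, hf'lip⟩⟩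
    · intro t ⟨ht1, ht2⟩
      rw [hf']
      by_cases h1 : t < B k
      · simp only [if_pos h1]
        rw [hf'']
        simp only [if_neg (not_lt.2 ht1)]
      · have : t = B k := le_antisymm ht2 (not_lt.1 h1)
        simp only [if_neg h1]
        rw [this, hgR1]
    · intro t ⟨ht1, ht2⟩
      rw [hf']
      by_cases h1 : t < B k
      · simp only [if_pos h1]
        rw [hf'']
        by_cases h2 : t < A k
        · simp only [if_pos h2]
          exact hgL2 t ⟨ht1, h2.le⟩
        · simp only [if_neg h2]
          exact hflift t ⟨not_lt.1 h2, h1.le⟩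
      · simp only [if_neg h1]
        exact hgR2 t ⟨not_lt.1 h1, ht2⟩
  choose st hst using hstep
  obtain ⟨F, hF0, hFs⟩ : ∃ F : ℕ → ℝ → V, F 0 = (fun _ => v₁) ∧
      ∀ k, F (k+1) = st k (F k) :=
    ⟨fun n => Nat.rec (fun _ => v₁) (fun k ih => st k ih) n, rfl, fun k => rfl⟩
  have hGoodF : ∀ k, (∀ t ∈ Icc (A k) (B k), σ (F k t) = c t) ∧
      LipschitzOnWith L (F k) (Icc (A k) (B k)) := by
    intro k; induction k with
    | zero => rw [hF0]; exact hGood0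
    | succ k ih =>
      rw [hFs k]
      exact ⟨(hst k (F k) ih).2.1, (hst k (F k) ih).2.2⟩
  have hcohS : ∀ k, ∀ t ∈ Icc (A k) (B k), F (k+1) t = F k t := by
    intro k t ht
    rw [hFs k]
    exact (hst k (F k) (hGoodF k)).1 t ht
  have hcoh : ∀ m k, k ≤ m → ∀ t ∈ Icc (A k) (B k), F m t = F k t := by
    intro m k hkm
    induction m, hkm using Nat.le_induction with
    | base => intro t _; rfl
    | succ m hm ih =>
      intro t ht
      have htm : t ∈ Icc (A m) (B m) :=
        ⟨le_trans (hAanti hm) ht.1, le_trans ht.2 (hBmono hm)⟩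
      rw [hcohS m t htm]
      exact ih t ht
  have hcover : ∀ t ∈ C, ∃ k, t ∈ Icc (A k) (B k) := by
    intro t ht
    obtain ⟨p, hp⟩ := ha2 t ht
    obtain ⟨q, hq⟩ := hb2 t ht
    refine ⟨max p q + 1, ?_, ?_⟩
    · calc A (max p q + 1) ≤ A (p + 1) :=
            hAanti (Nat.succ_le_succ (le_max_left p q))
        _ ≤ a p := by rw [hAs p]; exact min_le_right _ _
        _ ≤ t := hp
    · calc t ≤ b q := hq
        _ ≤ B (q + 1) := by rw [hBs q]; exact le_max_right _ _
        _ ≤ B (max p q + 1) := hBmono (Nat.succ_le_succ (le_max_right p q))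
  refine ⟨fun t => if h : ∃ k, t ∈ Icc (A k) (B k) then F (Nat.find h) t else 0, ?_, ?_⟩
  · intro t ht
    obtain ⟨k, hk⟩ := hcover t ht
    have hex : ∃ k, t ∈ Icc (A k) (B k) := ⟨k, hk⟩
    simp only [dif_pos hex]
    exact (hGoodF (Nat.find hex)).1 t (Nat.find_spec hex)
  · rw [lipschitzOnWith_iff_dist_le_mul]
    intro s hs t ht
    obtain ⟨ks, hks⟩ := hcover s hs
    obtain ⟨kt, hkt⟩ := hcover t ht
    have hexs : ∃ k, s ∈ Icc (A k) (B k) := ⟨ks, hks⟩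
    have hext : ∃ k, t ∈ Icc (A k) (B k) := ⟨kt, hkt⟩
    set m := max (Nat.find hexs) (Nat.find hext) with hm
    have hsm : s ∈ Icc (A m) (B m) := by
      have := Nat.find_spec hexs
      exact ⟨le_trans (hAanti (le_max_left _ _)) this.1,
        le_trans this.2 (hBmono (le_max_left _ _))⟩
    have htm : t ∈ Icc (A m) (B m) := by
      have := Nat.find_spec hext
      exact ⟨le_trans (hAanti (le_max_right _ _)) this.1,
        le_trans this.2 (hBmono (le_max_right _ _))⟩
    simp only [dif_pos hexs, dif_pos hext]
    have e1 : F (Nat.find hexs) s = F m s :=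
      (hcoh m (Nat.find hexs) (le_max_left _ _) s (Nat.find_spec hexs)).symm
    have e2 : F (Nat.find hext) t = F m t :=
      (hcoh m (Nat.find hext) (le_max_right _ _) t (Nat.find_spec hext)).symm
    rw [e1, e2]
    have := (hGoodF m).2
    rw [lipschitzOnWith_iff_dist_le_mul] at this
    exact this s hsm t htm
end Aux



/-- Gluing local Lipschitz lifts: let a compact group `G` act by linear isometries on a
finite-dimensional real inner product space `V`, let `σ : V → ℝⁿ` be `G`-invariant,
orbit-separating, with first component `σ v 0 = ‖v‖²`. If `c : I₀ → ℝⁿ` is continuous with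
values in `σ(V)` and near every `t₀ ∈ I₀` with `c₁ t₀ ≠ 0` there is a local lift of `c`
over `σ` (on a neighborhood of `t₀` in `{c₁ ≠ 0}`) that is Lipschitz with constant `L`,
then `c` admits a lift on all of `I₀` that is Lipschitz with constant `L`. -/
theorem stmt5 {V : Type*} [NormedAddCommGroup V] [InnerProductSpace ℝ V]
    [FiniteDimensional ℝ V]
    {G : Type*} [Group G] [TopologicalSpace G] [IsTopologicalGroup G] [CompactSpace G]
    (ρ : G →* (V ≃ₗᵢ[ℝ] V))
    (n : ℕ) (hn : 0 < n) (σ : V → Fin n → ℝ)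
    (hinv : ∀ (g : G) (v : V), σ (ρ g v) = σ v)
    (hsep : ∀ v w : V, σ v = σ w → ∃ g : G, ρ g w = v)
    (hσ1 : ∀ v : V, σ v ⟨0, hn⟩ = ‖v‖ ^ 2)
    (I₀ : Set ℝ) (hI₀ : Convex ℝ I₀)
    (c : ℝ → Fin n → ℝ) (hc : ContinuousOn c I₀)
    (hrange : ∀ t ∈ I₀, ∃ v : V, σ v = c t)
    (L : ℝ≥0)
    (hloc : ∀ t₀ ∈ I₀, c t₀ ⟨0, hn⟩ ≠ 0 →
      ∃ U : Set ℝ, IsOpen U ∧ t₀ ∈ U ∧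
        ∃ cl : ℝ → V,
          (∀ t ∈ U ∩ {t ∈ I₀ | c t ⟨0, hn⟩ ≠ 0}, σ (cl t) = c t) ∧
          LipschitzOnWith L cl (U ∩ {t ∈ I₀ | c t ⟨0, hn⟩ ≠ 0})) :
    ∃ cl : ℝ → V, (∀ t ∈ I₀, σ (cl t) = c t) ∧ LipschitzOnWith L cl I₀ := by

  classical
  set e : Fin n := ⟨0, hn⟩ with he
  have hM : Compat σ := by
    intro v w h
    obtain ⟨g, hg⟩ := hsep v w h
    exact ⟨ρ g, hg, fun u => hinv g u⟩
  have hce : ContinuousOn (fun t => c t e) I₀ :=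
    (continuous_apply e).comp_continuousOn hc
  have hH : HasLocalLifts σ e L I₀ c := by
    intro t₀ ht₀ hne
    obtain ⟨U, hUopen, ht₀U, g, hg1, hg2⟩ := hloc t₀ ht₀ hne
    have hcont := hce t₀ ht₀
    have hnhd : {x : ℝ | x ≠ 0} ∈ nhds (c t₀ e) := isOpen_ne.mem_nhds hne
    have := hcont.preimage_mem_nhdsWithin hnhd
    rw [Metric.mem_nhdsWithin_iff] at this
    obtain ⟨δ, hδ, hδsub⟩ := this
    obtain ⟨r, hr, hrsub⟩ := Metric.isOpen_iff.1 hUopen t₀ ht₀U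
    refine ⟨min δ r, lt_min hδ hr, g, ?_, ?_⟩
    · intro t ⟨ht1, ht2⟩
      have htδ : t ∈ Metric.ball t₀ δ := Metric.ball_subset_ball (min_le_left _ _) ht1
      have htne : c t e ≠ 0 := hδsub ⟨htδ, ht2⟩
      refine ⟨htne, hg1 t ⟨hrsub (Metric.ball_subset_ball (min_le_right _ _) ht1), ht2, htne⟩⟩
    · apply hg2.mono
      intro t ⟨ht1, ht2⟩
      have htδ : t ∈ Metric.ball t₀ δ := Metric.ball_subset_ball (min_le_left _ _) ht1
      exact ⟨hrsub (Metric.ball_subset_ball (min_le_right _ _) ht1), ht2, hδsub ⟨htδ, ht2⟩⟩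
  have hzero : ∀ z ∈ I₀, c z e = 0 → ∀ t ∈ I₀, ∀ v : V, σ v = c t →
      ‖v‖ ≤ (L : ℝ) * |t - z| :=
    fun z hz hze t ht v hv => zero_bound hM hH hσ1 hce hI₀ ht hz hze hv
  -- per-component lifts
  have hsingle : ∀ C : Set ℝ, ∃ f : ℝ → V,
      ((∀ u ∈ C, u ∈ I₀ ∧ c u e ≠ 0) ∧ Convex ℝ C) →
      ((∀ t ∈ C, σ (f t) = c t) ∧ LipschitzOnWith L f C) := by
    intro C
    by_cases hP : (∀ u ∈ C, u ∈ I₀ ∧ c u e ≠ 0) ∧ Convex ℝ C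
    · obtain ⟨f, hf⟩ := single_lift hM hH hrange
        (fun u hu => (hP.1 u hu).1) (fun u hu => (hP.1 u hu).2) hP.2
      exact ⟨f, fun _ => hf⟩
    · exact ⟨0, fun h => absurd h hP⟩
  choose Gf hGf using hsingle
  set J : ℝ → Set ℝ := fun t => {u | u ∈ I₀ ∧ ∀ w ∈ uIcc t u, c w e ≠ 0} with hJ
  have hJsub : ∀ t, ∀ u ∈ J t, u ∈ I₀ ∧ c u e ≠ 0 :=
    fun t u hu => ⟨hu.1, hu.2 u right_mem_uIcc⟩
  have hJmem : ∀ t ∈ I₀, c t e ≠ 0 → t ∈ J t := by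
    intro t ht htne
    exact ⟨ht, by intro w hw; rw [uIcc_self, mem_singleton_iff] at hw; rwa [hw]⟩
  have hJconv : ∀ t, Convex ℝ (J t) := by
    intro t
    rw [convex_iff_ordConnected]
    constructor
    intro x hx y hy z hz
    refine ⟨hI₀.ordConnected.out hx.1 hy.1 hz, ?_⟩
    intro w hw
    have h1 : uIcc t z ⊆ uIcc t x ∪ uIcc x z := uIcc_subset_uIcc_union_uIcc
    rcases h1 hw with h | h
    · exact hx.2 w (uIcc_comm t x ▸ h : w ∈ uIcc t x)
    · have h2 : uIcc x z ⊆ uIcc x y := uIcc_subset_uIcc left_mem_uIcc (Icc_subset_uIcc hz)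
      have h3 : uIcc x y ⊆ uIcc x t ∪ uIcc t y := uIcc_subset_uIcc_union_uIcc
      rcases h3 (h2 h) with h' | h'
      · exact hx.2 w (uIcc_comm x t ▸ h')
      · exact hy.2 w h'
  have hJeq : ∀ t u, u ∈ J t → J u = J t := by
    intro t u hu
    ext w
    constructor
    · intro hw
      refine ⟨hw.1, fun p hp => ?_⟩
      rcases uIcc_subset_uIcc_union_uIcc (b := u) hp with h | h
      · exact hu.2 p h
      · exact hw.2 p h
    · intro hw
      refine ⟨hw.1, fun p hp => ?_⟩
      rcases uIcc_subset_uIcc_union_uIcc (b := t) hp with h | h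
      · exact hu.2 p (uIcc_comm t u ▸ h)
      · exact hw.2 p h
  set cl : ℝ → V := fun t => if h : t ∈ I₀ ∧ c t e ≠ 0 then Gf (J t) t else 0 with hcl
  have hσ0 : ∀ t ∈ I₀, c t e = 0 → σ (0 : V) = c t := by
    intro t ht htz
    obtain ⟨v, hv⟩ := hrange t ht
    have : ‖v‖ ^ 2 = 0 := by rw [← hσ1 v, hv]; exact htz
    have hv0 : v = 0 := by
      have := pow_eq_zero_iff (n := 2) (by norm_num) |>.1 this
      exact norm_eq_zero.1 this
    rw [← hv0]; exact hv
  have hGfJ : ∀ t ∈ I₀, c t e ≠ 0 →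
      (∀ u ∈ J t, σ (Gf (J t) u) = c u) ∧ LipschitzOnWith L (Gf (J t)) (J t) :=
    fun t ht htne => hGf (J t) ⟨hJsub t, hJconv t⟩
  have hlift : ∀ t ∈ I₀, σ (cl t) = c t := by
    intro t ht
    rw [hcl]
    by_cases h : t ∈ I₀ ∧ c t e ≠ 0
    · simp only [dif_pos h]
      exact (hGfJ t ht h.2).1 t (hJmem t ht h.2)
    · simp only [dif_neg h]
      have htz : c t e = 0 := by
        by_contra hne
        exact h ⟨ht, hne⟩
      exact hσ0 t ht htz
  refine ⟨cl, hlift, ?_⟩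
  rw [lipschitzOnWith_iff_dist_le_mul]
  intro s hs t ht
  have habs : dist s t = |s - t| := Real.dist_eq s t
  by_cases hsS : c s e ≠ 0
  · by_cases hbetween : t ∈ J s
    · -- same component
      have hJt : J t = J s := hJeq s t hbetween
      have hgf := hGfJ s hs hsS
      have hcls : cl s = Gf (J s) s := by rw [hcl]; simp only [dif_pos (⟨hs, hsS⟩ : s ∈ I₀ ∧ c s e ≠ 0)]
      have hclt : cl t = Gf (J s) t := by
        rw [hcl]
        have htS : c t e ≠ 0 := (hJsub s t hbetween).2
        simp only [dif_pos (⟨ht, htS⟩ : t ∈ I₀ ∧ c t e ≠ 0)]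
        rw [hJt]
      rw [hcls, hclt]
      have := hgf.2
      rw [lipschitzOnWith_iff_dist_le_mul] at this
      exact this s (hJmem s hs hsS) t hbetween
    · -- zero in between
      have : ∃ z ∈ uIcc s t, c z e = 0 := by
        by_contra hcon
        push_neg at hcon
        exact hbetween ⟨ht, hcon⟩
      obtain ⟨z, hzmem, hz0⟩ := this
      have hzI : z ∈ I₀ := hI₀.ordConnected.uIcc_subset hs ht hzmem
      have h1 : ‖cl s‖ ≤ (L : ℝ) * |s - z| := hzero z hzI hz0 s hs (cl s) (hlift s hs)
      have h2 : ‖cl t‖ ≤ (L : ℝ) * |t - z| := hzero z hzI hz0 t ht (cl t) (hlift t ht)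
      have habs2 : |s - z| + |t - z| = |s - t| := by
        rw [uIcc_eq_union] at hzmem
        rcases hzmem with h | h
        · obtain ⟨ha, hb⟩ := h
          rw [abs_of_nonpos (by linarith), abs_of_nonneg (by linarith),
            abs_of_nonpos (by linarith)]
          ring
        · obtain ⟨ha, hb⟩ := h
          rw [abs_of_nonneg (by linarith), abs_of_nonpos (by linarith),
            abs_of_nonneg (by linarith)]
          ring
      calc dist (cl s) (cl t) ≤ ‖cl s‖ + ‖cl t‖ := dist_le_norm_add_norm _ _
        _ ≤ (L : ℝ) * |s - z| + (L : ℝ) * |t - z| := add_le_add h1 h2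
        _ = (L : ℝ) * |s - t| := by rw [← habs2]; ring
        _ = (L : ℝ) * dist s t := by rw [habs]
  · -- s is a zero
    push_neg at hsS
    have hcls : cl s = 0 := by
      rw [hcl]
      simp only [dif_neg (fun h : s ∈ I₀ ∧ c s e ≠ 0 => h.2 hsS)]
    have h2 : ‖cl t‖ ≤ (L : ℝ) * |t - s| := hzero s hs hsS t ht (cl t) (hlift t ht)
    calc dist (cl s) (cl t) = ‖cl t‖ := by rw [hcls, dist_comm, dist_zero_right]
      _ ≤ (L : ℝ) * |t - s| := h2
      _ = (L : ℝ) * dist s t := by rw [habs, abs_sub_comm]
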